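/- arXiv:1602.02070 — 3 statements merged into one kernel-verified Lean document; each statement's English description precedes it below -/
import Mathlib

section
/- Let M_r ∈ ℝ^{ρ_r×p} be a row-selection matrix and M_c ∈ ℝ^{n×ρ_c} a column-selection matrix, let P_{k_r} ∈ ℝ^{p×k_r} and Q_{k_c} ∈ ℝ^{n×k_c} have orthonormal columns, and let δ_r, δ_c ∈ (0,1). Suppose (1−δ_r)‖z‖₂² ≤ (p/ρ_r)‖M_r z‖₂² ≤ (1+δ_r)‖z‖₂² for all z ∈ span(P_{k_r}) and (1−δ_c)‖w‖₂² ≤ (n/ρ_c)‖M_c^⊤ w‖₂² ≤ (1+δ_c)‖w‖₂² for all w ∈ span(Q_{k_c}). Then for every Y ∈ ℝ^{p×n} whose columns lie in span(P_{k_r}) and whose rows lie in span(Q_{k_c}), one has (1−δ_c)(1−δ_r)‖Y‖_F² ≤ (np/(ρ_c ρ_r))‖M_r Y M_c‖_F² ≤ (1+δ_c)(1+δ_r)‖Y‖_F². -/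
open Matrix

/-- Frobenius norm of a real matrix. -/
noncomputable def frobNorm {m n : Type*} [Fintype m] [Fintype n] (A : Matrix m n ℝ) : ℝ :=
  Real.sqrt (∑ i, ∑ j, (A i j) ^ 2)

/-- Euclidean norm of a real vector. -/
noncomputable def vecNorm {n : Type*} [Fintype n] (x : n → ℝ) : ℝ :=
  Real.sqrt (∑ i, (x i) ^ 2)

/-- A row-selection matrix: its rows are distinct standard basis vectors of `ℝ^p`. -/
def IsRowSelection {ρ p : ℕ} (M : Matrix (Fin ρ) (Fin p) ℝ) : Prop :=
  ∃ f : Fin ρ → Fin p, Function.Injective f ∧ ∀ i j, M i j = if j = f i then 1 else 0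

/-- A column-selection matrix: its columns are distinct standard basis vectors of `ℝ^n`. -/
def IsColSelection {n ρ : ℕ} (M : Matrix (Fin n) (Fin ρ) ℝ) : Prop :=
  ∃ f : Fin ρ → Fin n, Function.Injective f ∧ ∀ i j, M i j = if i = f j then 1 else 0

/-- `y` lies in the span of the columns of `P`. -/
def inColSpan {p k : ℕ} (P : Matrix (Fin p) (Fin k) ℝ) (y : Fin p → ℝ) : Prop :=
  ∃ c : Fin k → ℝ, y = P.mulVec c

/-- `Y ∈ LR(P, Q)`: every column of `Y` lies in the column span of `P` and every row of `Y`
lies in the column span of `Q`. -/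
def memLR {p n kr kc : ℕ} (P : Matrix (Fin p) (Fin kr) ℝ) (Q : Matrix (Fin n) (Fin kc) ℝ)
    (Y : Matrix (Fin p) (Fin n) ℝ) : Prop :=
  (∀ j, inColSpan P (fun i => Y i j)) ∧ (∀ i, inColSpan Q (fun j => Y i j))

/-- Graph cumulative coherence `ν = max_i √n ‖Q^⊤ e_i‖₂`. -/
noncomputable def coherence {n k : ℕ} (Q : Matrix (Fin n) (Fin k) ℝ) : ℝ :=
  ⨆ i : Fin n, Real.sqrt n * vecNorm (fun j => Q i j)


lemma frobNorm_sq {m n : Type*} [Fintype m] [Fintype n] (A : Matrix m n ℝ) :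
    frobNorm A ^ 2 = ∑ i, ∑ j, (A i j) ^ 2 :=
  Real.sq_sqrt (Finset.sum_nonneg fun _ _ => Finset.sum_nonneg fun _ _ => sq_nonneg _)

lemma vecNorm_sq {n : Type*} [Fintype n] (x : n → ℝ) :
    vecNorm x ^ 2 = ∑ i, (x i) ^ 2 :=
  Real.sq_sqrt (Finset.sum_nonneg fun _ _ => sq_nonneg _)

lemma frob_sq_cols {p n : ℕ} (A : Matrix (Fin p) (Fin n) ℝ) :
    frobNorm A ^ 2 = ∑ j, vecNorm (fun i => A i j) ^ 2 := by
  rw [frobNorm_sq, Finset.sum_comm]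
  simp [vecNorm_sq]

lemma frob_sq_rows {p n : ℕ} (A : Matrix (Fin p) (Fin n) ℝ) :
    frobNorm A ^ 2 = ∑ i, vecNorm (fun j => A i j) ^ 2 := by
  rw [frobNorm_sq]
  simp [vecNorm_sq]

/-- combining a row RIP on `span(P_{k_r})` and a column RIP on
`span(Q_{k_c})` gives a two-sided RIP for matrices in `LR(P_{k_r}, Q_{k_c})`. -/
theorem rip_combined
    (p n ρr ρc kr kc : ℕ)
    (Mr : Matrix (Fin ρr) (Fin p) ℝ) (hMr : IsRowSelection Mr)
    (Mc : Matrix (Fin n) (Fin ρc) ℝ) (hMc : IsColSelection Mc)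
    (Pkr : Matrix (Fin p) (Fin kr) ℝ) (hP : Pkrᵀ * Pkr = 1)
    (Qkc : Matrix (Fin n) (Fin kc) ℝ) (hQ : Qkcᵀ * Qkc = 1)
    (δr δc : ℝ) (hδr : δr ∈ Set.Ioo (0 : ℝ) 1) (hδc : δc ∈ Set.Ioo (0 : ℝ) 1)
    (hRIPr : ∀ z : Fin p → ℝ, inColSpan Pkr z →
      (1 - δr) * (vecNorm z) ^ 2 ≤ ((p : ℝ) / ρr) * (vecNorm (Mr.mulVec z)) ^ 2 ∧
      ((p : ℝ) / ρr) * (vecNorm (Mr.mulVec z)) ^ 2 ≤ (1 + δr) * (vecNorm z) ^ 2)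
    (hRIPc : ∀ w : Fin n → ℝ, inColSpan Qkc w →
      (1 - δc) * (vecNorm w) ^ 2 ≤ ((n : ℝ) / ρc) * (vecNorm (Mcᵀ.mulVec w)) ^ 2 ∧
      ((n : ℝ) / ρc) * (vecNorm (Mcᵀ.mulVec w)) ^ 2 ≤ (1 + δc) * (vecNorm w) ^ 2)
    (Y : Matrix (Fin p) (Fin n) ℝ) (hY : memLR Pkr Qkc Y) :
    (1 - δc) * (1 - δr) * (frobNorm Y) ^ 2 ≤
      ((n : ℝ) * p / ((ρc : ℝ) * ρr)) * (frobNorm (Mr * Y * Mc)) ^ 2 ∧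
    ((n : ℝ) * p / ((ρc : ℝ) * ρr)) * (frobNorm (Mr * Y * Mc)) ^ 2 ≤
      (1 + δc) * (1 + δr) * (frobNorm Y) ^ 2 := by
  obtain ⟨f, hf, hfM⟩ := hMr
  set Z := Mr * Y with hZ
  have hcol : ∀ j, (fun i => Z i j) = Mr.mulVec (fun i => Y i j) := by
    intro j; funext i
    simp [hZ, Matrix.mul_apply, Matrix.mulVec, dotProduct]
  have hrowZ : ∀ i, (fun j => Z i j) = (fun j => Y (f i) j) := by
    intro i; funext j
    simp [hZ, Matrix.mul_apply, hfM]
  have hrow : ∀ i, (fun j => (Z * Mc) i j) = Mcᵀ.mulVec (fun j => Z i j) := by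
    intro i; funext j
    simp [Matrix.mul_apply, Matrix.mulVec, dotProduct, Matrix.transpose_apply,
      mul_comm]
  -- Step 1: row RIP summed over columns
  have h1l : (1 - δr) * frobNorm Y ^ 2 ≤ ((p : ℝ) / ρr) * frobNorm Z ^ 2 := by
    rw [frob_sq_cols Y, frob_sq_cols Z, Finset.mul_sum, Finset.mul_sum]
    refine Finset.sum_le_sum fun j _ => ?_
    rw [hcol j]
    exact (hRIPr _ (hY.1 j)).1
  have h1u : ((p : ℝ) / ρr) * frobNorm Z ^ 2 ≤ (1 + δr) * frobNorm Y ^ 2 := by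
    rw [frob_sq_cols Y, frob_sq_cols Z, Finset.mul_sum, Finset.mul_sum]
    refine Finset.sum_le_sum fun j _ => ?_
    rw [hcol j]
    exact (hRIPr _ (hY.1 j)).2
  -- Step 2: column RIP summed over rows of Z
  have hspan : ∀ i, inColSpan Qkc (fun j => Z i j) := by
    intro i; rw [hrowZ i]; exact hY.2 (f i)
  have h2l : (1 - δc) * frobNorm Z ^ 2 ≤ ((n : ℝ) / ρc) * frobNorm (Z * Mc) ^ 2 := by
    rw [frob_sq_rows Z, frob_sq_rows (Z * Mc), Finset.mul_sum, Finset.mul_sum]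
    refine Finset.sum_le_sum fun i _ => ?_
    rw [hrow i]
    exact (hRIPc _ (hspan i)).1
  have h2u : ((n : ℝ) / ρc) * frobNorm (Z * Mc) ^ 2 ≤ (1 + δc) * frobNorm Z ^ 2 := by
    rw [frob_sq_rows Z, frob_sq_rows (Z * Mc), Finset.mul_sum, Finset.mul_sum]
    refine Finset.sum_le_sum fun i _ => ?_
    rw [hrow i]
    exact (hRIPc _ (hspan i)).2
  have ha : (0 : ℝ) ≤ (p : ℝ) / ρr := by positivity
  have hδc1 : (0 : ℝ) ≤ 1 - δc := by linarith [hδc.2]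
  have hδc2 : (0 : ℝ) ≤ 1 + δc := by linarith [hδc.1]
  have hfac : (n : ℝ) * p / ((ρc : ℝ) * ρr) = ((n : ℝ) / ρc) * ((p : ℝ) / ρr) :=
    (div_mul_div_comm _ _ _ _).symm
  constructor
  · calc (1 - δc) * (1 - δr) * frobNorm Y ^ 2
        = (1 - δc) * ((1 - δr) * frobNorm Y ^ 2) := by ring
      _ ≤ (1 - δc) * (((p : ℝ) / ρr) * frobNorm Z ^ 2) :=
          mul_le_mul_of_nonneg_left h1l hδc1
      _ = ((p : ℝ) / ρr) * ((1 - δc) * frobNorm Z ^ 2) := by ring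
      _ ≤ ((p : ℝ) / ρr) * (((n : ℝ) / ρc) * frobNorm (Z * Mc) ^ 2) :=
          mul_le_mul_of_nonneg_left h2l ha
      _ = ((n : ℝ) * p / ((ρc : ℝ) * ρr)) * frobNorm (Mr * Y * Mc) ^ 2 := by
          rw [hfac, hZ]; ring
  · calc ((n : ℝ) * p / ((ρc : ℝ) * ρr)) * frobNorm (Mr * Y * Mc) ^ 2
        = ((p : ℝ) / ρr) * (((n : ℝ) / ρc) * frobNorm (Z * Mc) ^ 2) := by
          rw [hfac, hZ]; ring
      _ ≤ ((p : ℝ) / ρr) * ((1 + δc) * frobNorm Z ^ 2) :=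
          mul_le_mul_of_nonneg_left h2u ha
      _ = (1 + δc) * (((p : ℝ) / ρr) * frobNorm Z ^ 2) := by ring
      _ ≤ (1 + δc) * ((1 + δr) * frobNorm Y ^ 2) :=
          mul_le_mul_of_nonneg_left h1u hδc2
      _ = (1 + δc) * (1 + δr) * frobNorm Y ^ 2 := by ring
end

section
/- Let W ∈ ℝ^{n×n} be a symmetric matrix with nonnegative entries and zero diagonal (the weighted adjacency matrix of an undirected graph on n vertices), let D be the diagonal degree matrix with D_{ii} = Σ_j W_{ij}, and let L = D − W be the combinatorial Laplacian. Suppose the graph has exactly k connected components, each containing exactly n/k vertices. Then the kernel of L has dimension k (equivalently, the k smallest eigenvalues of L are all zero and λ_{k+1} > 0), and for any matrix Q_k ∈ ℝ^{n×k} whose columns form an orthonormal basis of ker(L), the cumulative coherence ν_k = max_{1≤i≤n} √n ‖Q_k^⊤ e_i‖₂ satisfies ν_k = √k. -/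
open Matrix

open scoped Classical

lemma lap_apply' {n : ℕ} (W : Matrix (Fin n) (Fin n) ℝ) (x : Fin n → ℝ) (i : Fin n) :
    ((Matrix.diagonal (fun i => ∑ j, W i j) - W).mulVec x) i = ∑ j, W i j * (x i - x j) := by
  rw [Matrix.sub_mulVec]
  simp only [Pi.sub_apply, mulVec_diagonal]
  rw [Matrix.mulVec, dotProduct, Finset.sum_mul, ← Finset.sum_sub_distrib]
  exact Finset.sum_congr rfl fun j _ => by ring

lemma ker_constant' {n : ℕ} (W : Matrix (Fin n) (Fin n) ℝ)
    (hWsymm : Wᵀ = W) (hWnonneg : ∀ i j, 0 ≤ W i j)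
    (x : Fin n → ℝ)
    (hx : (Matrix.diagonal (fun i => ∑ j, W i j) - W).mulVec x = 0) :
    ∀ a b : Fin n, Relation.ReflTransGen (fun p q => 0 < W p q) a b → x a = x b := by
  have hsym : ∀ a b, W a b = W b a := fun a b => congrFun (congrFun hWsymm b) a
  have h0 : ∀ i, ∑ j, W i j * (x i - x j) = 0 := fun i => by
    have := congrFun hx i
    rwa [lap_apply'] at this
  have hS : ∑ i, ∑ j, W i j * (x i - x j) ^ 2 = 0 := by
    have e1 : ∀ i : Fin n, ∑ j, W i j * (x i - x j) * x i = 0 := fun i => by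
      rw [← Finset.sum_mul, h0 i, zero_mul]
    have e2 : ∑ i, ∑ j, W i j * (x i - x j) * x j = 0 := by
      rw [Finset.sum_comm]
      refine Finset.sum_eq_zero fun j _ => ?_
      have : ∑ i, W i j * (x i - x j) * x j = (∑ i, W j i * (x j - x i)) * (- x j) := by
        rw [Finset.sum_mul]
        refine Finset.sum_congr rfl fun i _ => ?_
        rw [hsym i j]; ring
      rw [this, h0 j, zero_mul]
    calc ∑ i, ∑ j, W i j * (x i - x j) ^ 2
        = ∑ i, ∑ j, (W i j * (x i - x j) * x i - W i j * (x i - x j) * x j) := by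
          refine Finset.sum_congr rfl fun i _ => Finset.sum_congr rfl fun j _ => by ring
      _ = ∑ i, ((∑ j, W i j * (x i - x j) * x i) - ∑ j, W i j * (x i - x j) * x j) := by
          refine Finset.sum_congr rfl fun i _ => ?_
          rw [Finset.sum_sub_distrib]
      _ = 0 := by
          rw [Finset.sum_sub_distrib]
          simp only [e1, Finset.sum_const_zero, e2, sub_zero]
  have key : ∀ a b, 0 < W a b → x a = x b := by
    intro a b hab
    have hnn : ∀ i ∈ Finset.univ, 0 ≤ ∑ j, W i j * (x i - x j) ^ 2 := fun i _ =>
      Finset.sum_nonneg fun j _ => mul_nonneg (hWnonneg i j) (sq_nonneg _)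
    have hinner : ∑ j, W a j * (x a - x j) ^ 2 = 0 :=
      (Finset.sum_eq_zero_iff_of_nonneg hnn).mp hS a (Finset.mem_univ a)
    have hterm : W a b * (x a - x b) ^ 2 = 0 :=
      (Finset.sum_eq_zero_iff_of_nonneg fun j _ =>
        mul_nonneg (hWnonneg a j) (sq_nonneg _)).mp hinner b (Finset.mem_univ b)
    have : (x a - x b) ^ 2 = 0 := by
      rcases mul_eq_zero.mp hterm with h | h
      · exact absurd h (ne_of_gt hab)
      · exact h
    have := pow_eq_zero_iff (n := 2) (by norm_num) |>.mp this
    linarith [sub_eq_zero.mp this]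
  intro a b hab
  induction hab with
  | refl => rfl
  | tail _ h ih => exact ih.trans (key _ _ h)

lemma const_ker' {n k : ℕ} (W : Matrix (Fin n) (Fin n) ℝ)
    (hWnonneg : ∀ i j, 0 ≤ W i j)
    (c : Fin n → Fin k)
    (hcomp : ∀ i j, c i = c j ↔ Relation.ReflTransGen (fun p q => 0 < W p q) i j)
    (x : Fin n → ℝ) (hx : ∀ i j, c i = c j → x i = x j) :
    (Matrix.diagonal (fun i => ∑ j, W i j) - W).mulVec x = 0 := by
  funext i
  rw [lap_apply']
  refine Finset.sum_eq_zero fun j _ => ?_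
  rcases (hWnonneg i j).lt_or_eq with h | h
  · have : c i = c j := (hcomp i j).mpr (Relation.ReflTransGen.single h)
    rw [hx i j this, sub_self, mul_zero]
  · rw [← h, zero_mul]


/-- for the combinatorial Laplacian `L = D − W` of a graph with exactly
`k` connected components (each reachability class, encoded by the classifier `c`, has
exactly `m = n/k` vertices), the kernel of `L` has dimension `k`, and any matrix
`Q ∈ ℝ^{n×k}` whose columns form an orthonormal basis of `ker L` has cumulative
coherence `ν_k = √k`. -/
theorem laplacian_components_coherence
    (n k m : ℕ) (hm : 0 < m) (hn : n = k * m)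
    (W : Matrix (Fin n) (Fin n) ℝ)
    (hWsymm : Wᵀ = W) (hWnonneg : ∀ i j, 0 ≤ W i j) (hWdiag : ∀ i, W i i = 0)
    (L : Matrix (Fin n) (Fin n) ℝ)
    (hLdef : L = Matrix.diagonal (fun i => ∑ j, W i j) - W)
    (c : Fin n → Fin k)
    (hcomp : ∀ i j, c i = c j ↔ Relation.ReflTransGen (fun x y => 0 < W x y) i j)
    (hsize : ∀ t : Fin k, (Finset.univ.filter (fun i => c i = t)).card = m) :
    Module.finrank ℝ (LinearMap.ker L.mulVecLin) = k ∧
    ∀ Q : Matrix (Fin n) (Fin k) ℝ,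
      Qᵀ * Q = 1 →
      (∀ j, L.mulVec (fun i => Q i j) = 0) →
      Submodule.span ℝ (Set.range (fun j => fun i => Q i j)) =
        LinearMap.ker L.mulVecLin →
      coherence Q = Real.sqrt k := by
  subst hLdef
  set L : Matrix (Fin n) (Fin n) ℝ := Matrix.diagonal (fun i => ∑ j, W i j) - W with hL
  -- representatives
  have hex : ∀ t : Fin k, ∃ i, c i = t := by
    intro t
    have h1 : 0 < (Finset.univ.filter (fun i => c i = t)).card := by rw [hsize t]; exact hm
    obtain ⟨i, hi⟩ := Finset.card_pos.mp h1
    exact ⟨i, (Finset.mem_filter.mp hi).2⟩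
  choose rep hrep using hex
  -- kernel characterization
  have hker : ∀ x : Fin n → ℝ, L.mulVec x = 0 ↔ ∀ i j, c i = c j → x i = x j := by
    intro x
    constructor
    · intro hx i j hc
      exact ker_constant' W hWsymm hWnonneg x hx i j ((hcomp i j).mp hc)
    · intro hx
      exact const_ker' W hWnonneg c hcomp x hx
  -- indicator vectors
  set χ : Fin k → (Fin n → ℝ) := fun t i => if c i = t then 1 else 0 with hχ
  have hχker : ∀ t, χ t ∈ LinearMap.ker L.mulVecLin := by
    intro t
    rw [LinearMap.mem_ker, Matrix.mulVecLin_apply]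
    exact (hker (χ t)).mpr (fun i j hc => by simp [hχ, hc])
  have hsum : ∀ (a : Fin k → ℝ) (i : Fin n), (∑ t, a t • χ t) i = a (c i) := by
    intro a i
    rw [Finset.sum_apply]
    simp only [Pi.smul_apply, hχ, smul_eq_mul, mul_ite, mul_one, mul_zero]
    simp
  -- Part A: finrank of the kernel is k
  have hfinrank : Module.finrank ℝ (LinearMap.ker L.mulVecLin) = k := by
    have hli' : LinearIndependent ℝ χ := by
      rw [Fintype.linearIndependent_iff]
      intro a ha t
      have h1 := congrFun ha (rep t)
      rw [hsum a (rep t), hrep t] at h1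
      exact h1
    let v : Fin k → LinearMap.ker L.mulVecLin := fun t => ⟨χ t, hχker t⟩
    have hli : LinearIndependent ℝ v :=
      LinearIndependent.of_comp ((LinearMap.ker L.mulVecLin).subtype) hli'
    have hsp : ⊤ ≤ Submodule.span ℝ (Set.range v) := by
      rintro ⟨x, hx⟩ -
      have hx' : ∀ i j, c i = c j → x i = x j :=
        (hker x).mp (by rwa [LinearMap.mem_ker, Matrix.mulVecLin_apply] at hx)
      have hxe : (⟨x, hx⟩ : LinearMap.ker L.mulVecLin) = ∑ t, x (rep t) • v t := by
        apply Subtype.ext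
        have hcoe : ((∑ t, x (rep t) • v t : LinearMap.ker L.mulVecLin) : Fin n → ℝ)
            = ∑ t, x (rep t) • χ t := by
          simp [v]
        rw [hcoe]
        funext i
        rw [hsum (fun t => x (rep t)) i]
        exact (hx' (rep (c i)) i (hrep (c i))).symm
      rw [hxe]
      exact Submodule.sum_mem _ fun t _ =>
        Submodule.smul_mem _ _ (Submodule.subset_span ⟨t, rfl⟩)
    let b : Module.Basis (Fin k) ℝ (LinearMap.ker L.mulVecLin) := Module.Basis.mk hli hsp
    rw [Module.finrank_eq_card_basis b, Fintype.card_fin]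
  refine ⟨hfinrank, ?_⟩
  -- Part B
  intro Q hQorth hQker _
  have hQconst : ∀ (j : Fin k) (i i' : Fin n), c i = c i' → Q i j = Q i' j :=
    fun j i i' hc => (hker _).mp (hQker j) i i' hc
  have hm' : (0:ℝ) < (m:ℝ) := by exact_mod_cast hm
  have hsm : Real.sqrt m ≠ 0 := ne_of_gt (Real.sqrt_pos.mpr hm')
  set N : Matrix (Fin n) (Fin k) ℝ := fun i t => if c i = t then (Real.sqrt m)⁻¹ else 0 with hN
  set C : Matrix (Fin k) (Fin k) ℝ := fun t j => Real.sqrt m * Q (rep t) j with hC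
  have hQNC : Q = N * C := by
    ext i j
    rw [Matrix.mul_apply]
    simp only [hN, hC, ite_mul, zero_mul]
    rw [Finset.sum_ite_eq Finset.univ (c i)
      (fun t => (Real.sqrt m)⁻¹ * (Real.sqrt m * Q (rep t) j))]
    rw [if_pos (Finset.mem_univ _), ← mul_assoc, inv_mul_cancel₀ hsm, one_mul]
    exact hQconst j i (rep (c i)) (hrep (c i)).symm
  have hNtN : Nᵀ * N = 1 := by
    ext s t
    rw [Matrix.mul_apply, Matrix.one_apply]
    simp only [Matrix.transpose_apply]
    simp only [hN]
    by_cases hst : s = t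
    · subst hst
      rw [if_pos rfl]
      have he : ∀ i : Fin n, (if c i = s then (Real.sqrt m)⁻¹ else 0) *
          (if c i = s then (Real.sqrt m)⁻¹ else 0)
          = if c i = s then (Real.sqrt m)⁻¹ * (Real.sqrt m)⁻¹ else 0 := fun i => by
        by_cases h : c i = s <;> simp [h]
      rw [Finset.sum_congr rfl fun i _ => he i, ← Finset.sum_filter, Finset.sum_const,
        hsize s, nsmul_eq_mul, ← mul_inv, Real.mul_self_sqrt (le_of_lt hm'),
        mul_inv_cancel₀ (ne_of_gt hm')]
    · rw [if_neg hst]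
      refine Finset.sum_eq_zero fun i _ => ?_
      by_cases h1 : c i = s
      · by_cases h2 : c i = t
        · exact absurd (h1.symm.trans h2) hst
        · simp [h2]
      · simp [h1]
  have hCtC : Cᵀ * C = 1 := by
    have h1 : Qᵀ * Q = Cᵀ * (Nᵀ * N) * C := by
      rw [hQNC, Matrix.transpose_mul]
      simp only [Matrix.mul_assoc]
    rw [hNtN, Matrix.mul_one] at h1
    rw [← h1, hQorth]
  have hCCt : C * Cᵀ = 1 := mul_eq_one_comm.mp hCtC
  have hrow : ∀ i, ∑ j, Q i j ^ 2 = (m : ℝ)⁻¹ := by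
    intro i
    have hQij : ∀ j, Q i j = (Real.sqrt m)⁻¹ * C (c i) j := fun j => by
      simp only [hC]
      rw [← mul_assoc, inv_mul_cancel₀ hsm, one_mul]
      exact hQconst j i (rep (c i)) (hrep (c i)).symm
    have hCr : ∑ j, C (c i) j ^ 2 = 1 := by
      have h2 : (C * Cᵀ) (c i) (c i) = (1 : Matrix (Fin k) (Fin k) ℝ) (c i) (c i) := by
        rw [hCCt]
      rw [Matrix.mul_apply, Matrix.one_apply_eq] at h2
      rw [← h2]
      exact Finset.sum_congr rfl fun j _ => by rw [Matrix.transpose_apply, pow_two]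
    have hsqi : ((Real.sqrt m)⁻¹) ^ 2 = (m : ℝ)⁻¹ := by
      rw [inv_pow, Real.sq_sqrt (le_of_lt hm')]
    calc ∑ j, Q i j ^ 2 = ∑ j, ((Real.sqrt m)⁻¹) ^ 2 * C (c i) j ^ 2 :=
          Finset.sum_congr rfl fun j _ => by rw [hQij j]; ring
      _ = ((Real.sqrt m)⁻¹) ^ 2 * ∑ j, C (c i) j ^ 2 := by rw [Finset.mul_sum]
      _ = (m : ℝ)⁻¹ := by rw [hCr, mul_one, hsqi]
  have hpt : ∀ i : Fin n, Real.sqrt n * vecNorm (fun j => Q i j) = Real.sqrt k := by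
    intro i
    rw [vecNorm, hrow i, ← Real.sqrt_mul (Nat.cast_nonneg n)]
    congr 1
    rw [hn]
    push_cast
    field_simp
  unfold coherence
  rcases isEmpty_or_nonempty (Fin n) with he | hne
  · have hn0 : n = 0 := by
      by_contra h
      exact he.false ⟨0, Nat.pos_of_ne_zero h⟩
    have hk0 : k = 0 := by
      have h1 : k * m = 0 := by omega
      rcases Nat.mul_eq_zero.mp h1 with h | h
      · exact h
      · omega
    rw [Real.iSup_of_isEmpty, hk0]
    simp
  · rw [iSup_congr hpt, ciSup_const]
end

section
/- Assume λ_{k_c+1} > 0 and λ_{k_r+1} > 0, let γ > 0, and set γ̄_c = γ/λ_{k_c+1}, γ̄_r = γ/λ_{k_r+1}. Let X̄ ∈ LR(P_{k_r}, Q_{k_c}), Ẽ ∈ ℝ^{ρ_r×ρ_c}, X̃ = M_r X̄ M_c + Ẽ, and let X* be a minimizer over X ∈ ℝ^{p×n} of ‖M_r X M_c − X̃‖_F² + γ̄_c tr(X L_c X^⊤) + γ̄_r tr(X^⊤ L_r X). Then ‖M_r X* M_c − X̃‖_F ≤ ‖Ẽ‖_F + √(γ (λ_{k_c}/λ_{k_c+1}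 + λ_{k_r}/λ_{k_r+1})) ‖X̄‖_F. -/
open Matrix

lemma trace_quad_rows {m N : ℕ} (L : Matrix (Fin N) (Fin N) ℝ) (X : Matrix (Fin m) (Fin N) ℝ) :
    Matrix.trace (X * L * Xᵀ) = ∑ i, (fun j => X i j) ⬝ᵥ L *ᵥ (fun j => X i j) := by
  simp only [Matrix.trace, Matrix.diag, Matrix.mul_apply, Matrix.transpose_apply,
    dotProduct, Matrix.mulVec, Finset.sum_mul, Finset.mul_sum]
  refine Finset.sum_congr rfl fun i _ => ?_
  rw [Finset.sum_comm]
  refine Finset.sum_congr rfl fun a _ => Finset.sum_congr rfl fun b _ => by ring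

lemma trace_quad_cols {N m : ℕ} (L : Matrix (Fin N) (Fin N) ℝ) (X : Matrix (Fin N) (Fin m) ℝ) :
    Matrix.trace (Xᵀ * L * X) = ∑ j, (fun i => X i j) ⬝ᵥ L *ᵥ (fun i => X i j) := by
  simp only [Matrix.trace, Matrix.diag, Matrix.mul_apply, Matrix.transpose_apply,
    dotProduct, Matrix.mulVec, Finset.sum_mul, Finset.mul_sum]
  refine Finset.sum_congr rfl fun i _ => ?_
  rw [Finset.sum_comm]
  refine Finset.sum_congr rfl fun a _ => Finset.sum_congr rfl fun b _ => by ring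

lemma quad_eq {N K : ℕ} (L : Matrix (Fin N) (Fin N) ℝ) (hL : Lᵀ = L)
    (Qk : Matrix (Fin N) (Fin K) ℝ) (v : Fin K → ℝ) :
    (Qk *ᵥ v) ⬝ᵥ L *ᵥ (Qk *ᵥ v) = ((Qkᵀ * L * Qk) *ᵥ v) ⬝ᵥ v := by
  rw [mulVec_mulVec, dotProduct_mulVec]
  have : (Qk *ᵥ v) ᵥ* (L * Qk) = ((L * Qk)ᵀ * Qk) *ᵥ v := by
    rw [← Matrix.mulVec_transpose, mulVec_mulVec]
  rw [this]
  congr 1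
  rw [Matrix.transpose_mul, hL]
 
 

lemma diag_quad {K : ℕ} (d : Fin K → ℝ) (v : Fin K → ℝ) :
    ((Matrix.diagonal d) *ᵥ v) ⬝ᵥ v = ∑ j, d j * v j ^ 2 := by
  simp [Matrix.mulVec, dotProduct, Matrix.diagonal_apply, ite_mul, Finset.sum_ite_eq]
  refine Finset.sum_congr rfl fun j _ => by ring

lemma sub_conj {N K : ℕ} (L : Matrix (Fin N) (Fin N) ℝ) (Q : Matrix (Fin N) (Fin N) ℝ)
    (g : Fin K → Fin N) :
    (Q.submatrix id g)ᵀ * L * (Q.submatrix id g) = (Qᵀ * L * Q).submatrix g g := by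
  rw [Matrix.transpose_submatrix,
    Matrix.submatrix_mul (Qᵀ * L) Q g id g Function.bijective_id,
    Matrix.submatrix_mul Qᵀ L g id id Function.bijective_id,
    Matrix.submatrix_id_id]

lemma span_quad_bound {N K : ℕ} (L : Matrix (Fin N) (Fin N) ℝ) (hL : Lᵀ = L)
    (Q : Matrix (Fin N) (Fin N) ℝ) (ev : Fin N → ℝ)
    (hQLQ : Qᵀ * L * Q = Matrix.diagonal ev) (hQQ : Qᵀ * Q = 1)
    (g : Fin K → Fin N) (hg : Function.Injective g) (lam : ℝ)
    (hlam : ∀ j, ev (g j) ≤ lam) (v : Fin K → ℝ) :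
    ((Q.submatrix id g) *ᵥ v) ⬝ᵥ L *ᵥ ((Q.submatrix id g) *ᵥ v) ≤
      lam * ∑ j, ((Q.submatrix id g) *ᵥ v) j ^ 2 := by
  set Qs := Q.submatrix id g with hQs
  have hdiag : Qsᵀ * L * Qs = Matrix.diagonal (ev ∘ g) := by
    rw [hQs, sub_conj, hQLQ, Matrix.submatrix_diagonal ev g hg]
  have hone : Qsᵀ * Qs = 1 := by
    have := sub_conj (1 : Matrix (Fin N) (Fin N) ℝ) Q g
    rw [Matrix.mul_one] at this
    rw [hQs, this, Matrix.mul_one, hQQ]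
    exact Matrix.submatrix_one g hg
  have hsum : ∀ (M : ℕ) (x : Fin M → ℝ), ∑ j, x j ^ 2 = x ⬝ᵥ x := by
    intro M x; simp [dotProduct, sq]
  have h2 : ∑ j, (Qs *ᵥ v) j ^ 2 = ∑ j, v j ^ 2 := by
    rw [hsum N]
    have := quad_eq (1 : Matrix (Fin N) (Fin N) ℝ) (Matrix.transpose_one) Qs v
    rw [Matrix.one_mulVec] at this
    rw [this, Matrix.mul_one, hone, Matrix.one_mulVec]
    simp [dotProduct, sq]
  rw [quad_eq L hL Qs v, hdiag, diag_quad, h2, Finset.mul_sum]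
  refine Finset.sum_le_sum fun j _ => ?_
  exact mul_le_mul_of_nonneg_right (hlam j) (sq_nonneg _)

lemma frobNorm_nonneg {m n : Type*} [Fintype m] [Fintype n] (A : Matrix m n ℝ) :
    0 ≤ frobNorm A := Real.sqrt_nonneg _

lemma frobNorm_neg {m n : Type*} [Fintype m] [Fintype n] (A : Matrix m n ℝ) :
    frobNorm (-A) = frobNorm A := by
  simp [frobNorm]


/-- residual bound for the alternate decoder:
`‖M_r X* M_c − X̃‖_F ≤ ‖Ẽ‖_F + √(γ(λ_{k_c}/λ_{k_c+1} + λ_{k_r}/λ_{k_r+1})) ‖X̄‖_F`.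
The 1-indexed eigenvalues `λ_{k_c}`, `λ_{k_c+1}` are `evc ⟨k_c−1⟩`, `evc ⟨k_c⟩`
(similarly for `r`). -/
theorem alternate_decoder_residual_bound
    (p n ρr ρc kr kc : ℕ) (hkr0 : 0 < kr) (hkr : kr < p) (hkc0 : 0 < kc) (hkc : kc < n)
    (Lr : Matrix (Fin p) (Fin p) ℝ) (Lc : Matrix (Fin n) (Fin n) ℝ)
    (hLr : Lr.PosSemidef) (hLc : Lc.PosSemidef)
    (evr : Fin p → ℝ) (evc : Fin n → ℝ) (hevr : Monotone evr) (hevc : Monotone evc)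
    (P : Matrix (Fin p) (Fin p) ℝ) (Q : Matrix (Fin n) (Fin n) ℝ)
    (hPorth : Pᵀ * P = 1) (hQorth : Qᵀ * Q = 1)
    (hLrP : Lr * P = P * Matrix.diagonal evr)
    (hLcQ : Lc * Q = Q * Matrix.diagonal evc)
    (Pkr : Matrix (Fin p) (Fin kr) ℝ) (hPkr : Pkr = P.submatrix id (Fin.castLE hkr.le))
    (Qkc : Matrix (Fin n) (Fin kc) ℝ) (hQkc : Qkc = Q.submatrix id (Fin.castLE hkc.le))
    (Mr : Matrix (Fin ρr) (Fin p) ℝ) (hMr : IsRowSelection Mr)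
    (Mc : Matrix (Fin n) (Fin ρc) ℝ) (hMc : IsColSelection Mc)
    (hlamc1 : 0 < evc ⟨kc, hkc⟩) (hlamr1 : 0 < evr ⟨kr, hkr⟩)
    (γ γc γr : ℝ) (hγ : 0 < γ)
    (hγc : γc = γ / evc ⟨kc, hkc⟩) (hγr : γr = γ / evr ⟨kr, hkr⟩)
    (Xbar : Matrix (Fin p) (Fin n) ℝ) (hXbar : memLR Pkr Qkc Xbar)
    (Etil : Matrix (Fin ρr) (Fin ρc) ℝ)
    (Xtil : Matrix (Fin ρr) (Fin ρc) ℝ) (hXtil : Xtil = Mr * Xbar * Mc + Etil)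
    (Xstar : Matrix (Fin p) (Fin n) ℝ)
    (hmin : ∀ X : Matrix (Fin p) (Fin n) ℝ,
      (frobNorm (Mr * Xstar * Mc - Xtil)) ^ 2 + γc * Matrix.trace (Xstar * Lc * Xstarᵀ)
        + γr * Matrix.trace (Xstarᵀ * Lr * Xstar) ≤
      (frobNorm (Mr * X * Mc - Xtil)) ^ 2 + γc * Matrix.trace (X * Lc * Xᵀ)
        + γr * Matrix.trace (Xᵀ * Lr * X)) :
    frobNorm (Mr * Xstar * Mc - Xtil) ≤
      frobNorm Etil +
        Real.sqrt (γ * (evc ⟨kc - 1, by omega⟩ / evc ⟨kc, hkc⟩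
          + evr ⟨kr - 1, by omega⟩ / evr ⟨kr, hkr⟩)) * frobNorm Xbar := by
  obtain ⟨hXbarC, hXbarR⟩ := hXbar
  -- symmetry of Lc, Lr
  have hLcT : Lcᵀ = Lc := by
    have := hLc.1
    rwa [Matrix.IsHermitian, Matrix.conjTranspose_eq_transpose_of_trivial] at this
  have hLrT : Lrᵀ = Lr := by
    have := hLr.1
    rwa [Matrix.IsHermitian, Matrix.conjTranspose_eq_transpose_of_trivial] at this
  -- diagonalization
  have hQLQ : Qᵀ * Lc * Q = Matrix.diagonal evc := by
    rw [Matrix.mul_assoc, hLcQ, ← Matrix.mul_assoc, hQorth, Matrix.one_mul]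
  have hPLP : Pᵀ * Lr * P = Matrix.diagonal evr := by
    rw [Matrix.mul_assoc, hLrP, ← Matrix.mul_assoc, hPorth, Matrix.one_mul]
  -- eigenvalues are nonnegative
  have hevc_nonneg : ∀ i, 0 ≤ evc i := by
    intro i
    have h1 : (0:ℝ) ≤ (Q *ᵥ Pi.single i 1) ⬝ᵥ Lc *ᵥ (Q *ᵥ Pi.single i 1) := by
      simpa using hLc.dotProduct_mulVec_nonneg (Q *ᵥ Pi.single i 1)
    rw [quad_eq Lc hLcT Q (Pi.single i 1), hQLQ, diag_quad] at h1
    simpa [Pi.single_apply, sq, ite_mul, Finset.sum_ite_eq] using h1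
  have hevr_nonneg : ∀ i, 0 ≤ evr i := by
    intro i
    have h1 : (0:ℝ) ≤ (P *ᵥ Pi.single i 1) ⬝ᵥ Lr *ᵥ (P *ᵥ Pi.single i 1) := by
      simpa using hLr.dotProduct_mulVec_nonneg (P *ᵥ Pi.single i 1)
    rw [quad_eq Lr hLrT P (Pi.single i 1), hPLP, diag_quad] at h1
    simpa [Pi.single_apply, sq, ite_mul, Finset.sum_ite_eq] using h1
  -- nonnegativity of the regularizer at Xstar
  have hT1 : 0 ≤ Matrix.trace (Xstar * Lc * Xstarᵀ) := by
    rw [trace_quad_rows]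
    exact Finset.sum_nonneg fun i _ => by simpa using hLc.dotProduct_mulVec_nonneg (fun j => Xstar i j)
  have hT2 : 0 ≤ Matrix.trace (Xstarᵀ * Lr * Xstar) := by
    rw [trace_quad_cols]
    exact Finset.sum_nonneg fun j _ => by simpa using hLr.dotProduct_mulVec_nonneg (fun i => Xstar i j)
  -- trace bounds at Xbar
  set lamc := evc ⟨kc - 1, by omega⟩ with hlamc_def
  set lamr := evr ⟨kr - 1, by omega⟩ with hlamr_def
  have hS1 : Matrix.trace (Xbar * Lc * Xbarᵀ) ≤ lamc * frobNorm Xbar ^ 2 := by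
    rw [trace_quad_rows, frobNorm_sq, Finset.mul_sum]
    refine Finset.sum_le_sum fun i _ => ?_
    obtain ⟨v, hv⟩ := hXbarR i
    have hv' : ∀ j, Xbar i j = (Qkc *ᵥ v) j := fun j => congrFun hv j
    simp only [hv', hQkc]
    exact span_quad_bound Lc hLcT Q evc hQLQ hQorth (Fin.castLE hkc.le) (Fin.castLE_injective _) lamc
      (fun j => hevc (by have := j.isLt; simp [Fin.le_def]; omega)) v
  have hS2 : Matrix.trace (Xbarᵀ * Lr * Xbar) ≤ lamr * frobNorm Xbar ^ 2 := by
    rw [trace_quad_cols, frobNorm_sq, Finset.sum_comm, Finset.mul_sum]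
    refine Finset.sum_le_sum fun j _ => ?_
    obtain ⟨v, hv⟩ := hXbarC j
    have hv' : ∀ i, Xbar i j = (Pkr *ᵥ v) i := fun i => congrFun hv i
    simp only [hv', hPkr]
    exact span_quad_bound Lr hLrT P evr hPLP hPorth (Fin.castLE hkr.le) (Fin.castLE_injective _) lamr
      (fun i => hevr (by have := i.isLt; simp [Fin.le_def]; omega)) v
  -- use minimality at Xbar
  have hres : Mr * Xbar * Mc - Xtil = -Etil := by rw [hXtil]; exact sub_add_cancel_left _ _
  have hkey := hmin Xbar
  rw [hres, frobNorm_neg] at hkey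
  set R := frobNorm (Mr * Xstar * Mc - Xtil) with hR
  set E := frobNorm Etil with hE
  set F := frobNorm Xbar with hF
  have hγc0 : 0 < γc := by rw [hγc]; positivity
  have hγr0 : 0 < γr := by rw [hγr]; positivity
  set C : ℝ := γ * (lamc / evc ⟨kc, hkc⟩ + lamr / evr ⟨kr, hkr⟩) with hC_def
  have hC : 0 ≤ C := by
    apply mul_nonneg hγ.le
    exact add_nonneg (div_nonneg (hevc_nonneg _) hlamc1.le)
      (div_nonneg (hevr_nonneg _) hlamr1.le)
  have h1 : γc * Matrix.trace (Xbar * Lc * Xbarᵀ) ≤ γ * (lamc / evc ⟨kc, hkc⟩) * F ^ 2 := by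
    calc γc * Matrix.trace (Xbar * Lc * Xbarᵀ) ≤ γc * (lamc * F ^ 2) :=
          mul_le_mul_of_nonneg_left hS1 hγc0.le
      _ = γ * (lamc / evc ⟨kc, hkc⟩) * F ^ 2 := by rw [hγc]; field_simp
  have h2 : γr * Matrix.trace (Xbarᵀ * Lr * Xbar) ≤ γ * (lamr / evr ⟨kr, hkr⟩) * F ^ 2 := by
    calc γr * Matrix.trace (Xbarᵀ * Lr * Xbar) ≤ γr * (lamr * F ^ 2) :=
          mul_le_mul_of_nonneg_left hS2 hγr0.le
      _ = γ * (lamr / evr ⟨kr, hkr⟩) * F ^ 2 := by rw [hγr]; field_simp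
  have hR2 : R ^ 2 ≤ E ^ 2 + C * F ^ 2 := by
    have hexp : C * F ^ 2 = γ * (lamc / evc ⟨kc, hkc⟩) * F ^ 2
        + γ * (lamr / evr ⟨kr, hkr⟩) * F ^ 2 := by rw [hC_def]; ring
    nlinarith [mul_nonneg hγc0.le hT1, mul_nonneg hγr0.le hT2]
  set B : ℝ := Real.sqrt C * F with hB_def
  have hB0 : 0 ≤ B := mul_nonneg (Real.sqrt_nonneg _) (frobNorm_nonneg _)
  have hE0 : 0 ≤ E := frobNorm_nonneg _
  have hB2 : B ^ 2 = C * F ^ 2 := by rw [hB_def, mul_pow, Real.sq_sqrt hC]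
  have h3 : R ^ 2 ≤ (E + B) ^ 2 := by
    have hexp2 : (E + B) ^ 2 = E ^ 2 + 2 * (E * B) + B ^ 2 := by ring
    linarith [mul_nonneg hE0 hB0]
  have h4 := Real.sqrt_le_sqrt h3
  rwa [Real.sqrt_sq (frobNorm_nonneg _), Real.sqrt_sq (by positivity)] at h4
end
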